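/- Let c ≥ 1 be an integer, k an odd positive integer, ζ a primitive 2c-th root of unity, d, z ≥ 0 integers, and P ∈ ℤ[ζ][x]. If n ≥ (deg(P)+2d+1)·kc, then Φ_{kc}(q)^{d+1} divides ∑_{m=0}^{n} ζ^m P(m) q^{zm} binom(n,m)_q in ℤ[ζ][q]. -/
import Mathlib

open Polynomial Finset

/-- The Gaussian (q-)binomial coefficient as a polynomial, satisfying the
product formula `∏_{i=n-m+1}^{n}(1-q^i) / ∏_{i=1}^{m}(1-q^i)`. -/
noncomputable def qbinom (R : Type*) [CommRing R] : ℕ → ℕ → Polynomial R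
  | _, 0 => 1
  | 0, _+1 => 0
  | n+1, m+1 => qbinom R n (m+1) + X ^ (n - m) * qbinom R n m

variable {R : Type*} [CommRing R]

lemma qbinom_zero_right (n : ℕ) : qbinom R n 0 = 1 := by cases n <;> rfl

lemma qbinom_succ_succ (n m : ℕ) :
    qbinom R (n+1) (m+1) = qbinom R n (m+1) + X ^ (n - m) * qbinom R n m := rfl

lemma qbinom_eq_zero : ∀ {n m : ℕ}, n < m → qbinom R n m = 0 := by
  intro n
  induction n with
  | zero => intro m h; cases m with | zero => omega | succ m => rfl
  | succ n ih =>
    intro m h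
    cases m with
    | zero => omega
    | succ m =>
      rw [qbinom_succ_succ, ih (by omega), ih (by omega)]
      ring

lemma qbinom_diag (n : ℕ) : qbinom R n n = 1 := by
  induction n with
  | zero => rfl
  | succ n ih => rw [qbinom_succ_succ, qbinom_eq_zero (by omega), ih]; simp

lemma qbinom_mul_prod : ∀ n m : ℕ, m ≤ n →
    qbinom R n m * ∏ i ∈ range m, (X ^ (i+1) - 1) = ∏ i ∈ range m, (X ^ (n-i) - 1) := by
  intro n
  induction n with
  | zero => intro m h; interval_cases m; simp [qbinom_zero_right]
  | succ n ih =>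
    intro m h
    cases m with
    | zero => simp [qbinom_zero_right]
    | succ m =>
      rcases eq_or_lt_of_le (Nat.succ_le_succ_iff.mp h) with rfl | hmn
      · -- m = n
        rw [qbinom_succ_succ, qbinom_eq_zero (by omega), qbinom_diag]
        have : ∀ (N : ℕ), ∏ i ∈ range (N+1), (X ^ (i+1) - (1:Polynomial R)) =
            ∏ i ∈ range (N+1), (X ^ (N+1-i) - 1) := by
          intro N
          rw [← Finset.prod_range_reflect]
          apply Finset.prod_congr rfl
          intro i hi
          simp only [Finset.mem_range] at hi
          congr 2
          omega
        rw [zero_add, Nat.sub_self, pow_zero, one_mul, this m, one_mul]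
      · -- m < n
        have h1 : m + 1 ≤ n := hmn
        have h2 : m ≤ n := by omega
        rw [qbinom_succ_succ, add_mul]
        rw [ih (m+1) h1]
        rw [Finset.prod_range_succ (fun i => X ^ (i+1) - (1:Polynomial R)) m]
        have hL1 : ∏ i ∈ range (m+1), (X ^ (n-i) - (1:Polynomial R))
            = (X ^ (n-m) - 1) * ∏ i ∈ range m, (X ^ (n-i) - 1) := by
          rw [Finset.prod_range_succ]; ring
        have hR : ∏ i ∈ range (m+1), (X ^ (n+1-i) - (1:Polynomial R))
            = (X ^ (n+1) - 1) * ∏ i ∈ range m, (X ^ (n-i) - 1) := by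
          rw [Finset.prod_range_succ', mul_comm]
          congr 1
          apply Finset.prod_congr rfl
          intro i hi; congr 2; omega
        rw [hL1, hR]
        have hx : X^(n-m) * X^(m+1) = (X:Polynomial R)^(n+1) := by
          rw [← pow_add]; congr 1; omega
        linear_combination (X^(n-m)*(X^(m+1)-1)) * ih m h2
          + (∏ i ∈ range m, (X ^ (n-i) - (1:Polynomial R))) * hx


lemma prodD_monic (m : ℕ) : (∏ i ∈ range m, (X ^ (i+1) - 1) : Polynomial R).Monic := by
  apply monic_prod_of_monic
  intro i _
  have := monic_X_pow_sub_C (1 : R) (n := i+1) (by omega)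
  simpa using this

lemma qbinom_pascal' (n m : ℕ) :
    qbinom R (n+1) (m+1) = X ^ (m+1) * qbinom R n (m+1) + qbinom R n m := by
  rcases lt_or_ge n m with hnm | hnm
  · rw [qbinom_eq_zero (by omega), qbinom_eq_zero (by omega), qbinom_eq_zero (by omega)]
    ring
  rcases eq_or_lt_of_le hnm with rfl | hlt
  · rw [qbinom_diag, qbinom_eq_zero (by omega), qbinom_diag]; ring
  -- m < n
  have hmn : m + 1 ≤ n := hlt
  refine (prodD_monic (R := R) (m+1)).isRegular.left ?_
  show (∏ i ∈ range (m+1), (X ^ (i+1) - 1)) * qbinom R (n+1) (m+1)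
      = (∏ i ∈ range (m+1), (X ^ (i+1) - 1)) * (X ^ (m+1) * qbinom R n (m+1) + qbinom R n m)
  have e1 := qbinom_mul_prod (R := R) (n+1) (m+1) (by omega)
  have e3 := qbinom_mul_prod (R := R) n m (by omega)
  have e2' : qbinom R n (m+1) * ∏ i ∈ range (m+1), (X ^ (i+1) - 1)
      = (X ^ (n-m) - 1) * ∏ i ∈ range m, (X ^ (n-i) - 1) := by
    rw [qbinom_mul_prod (R := R) n (m+1) hmn, Finset.prod_range_succ]; ring
  have hD : (∏ i ∈ range (m+1), (X ^ (i+1) - (1:Polynomial R)))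
      = (∏ i ∈ range m, (X ^ (i+1) - 1)) * (X ^ (m+1) - 1) := Finset.prod_range_succ _ _
  have hTop : ∏ i ∈ range (m+1), (X ^ (n+1-i) - (1:Polynomial R))
      = (X ^ (n+1) - 1) * ∏ i ∈ range m, (X ^ (n-i) - 1) := by
    rw [Finset.prod_range_succ', mul_comm]
    congr 1
    apply Finset.prod_congr rfl
    intro i hi; congr 2; omega
  have hx : X^(n-m) * X^(m+1) = (X:Polynomial R)^(n+1) := by
    rw [← pow_add]; congr 1; omega
  linear_combination e1 + hTop - X^(m+1) * e2' - (qbinom R n m) * hD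
    - (X^(m+1)-1) * e3 - (∏ i ∈ range m, (X ^ (n-i) - (1:Polynomial R))) * hx

lemma qbinom_map {S : Type*} [CommRing S] (g : R →+* S) :
    ∀ n m : ℕ, (qbinom R n m).map g = qbinom S n m := by
  intro n
  induction n with
  | zero => intro m; cases m with
    | zero => simp [qbinom]
    | succ m => simp [qbinom]
  | succ n ih =>
    intro m
    cases m with
    | zero => simp [qbinom_zero_right]
    | succ m =>
      rw [qbinom_succ_succ, qbinom_succ_succ, Polynomial.map_add, Polynomial.map_mul,
        Polynomial.map_pow, map_X, ih, ih]

lemma cyclotomic_not_dvd_X_pow_sub_one {N s : ℕ} (hN : 0 < N) (hs : 0 < s) (hsN : s < N) :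
    ¬ (cyclotomic N ℤ ∣ (X ^ s - 1)) := by
  intro hdvd
  have hω : IsPrimitiveRoot (Complex.exp (2 * Real.pi * Complex.I / N)) N :=
    Complex.isPrimitiveRoot_exp N (by omega)
  set ω := Complex.exp (2 * Real.pi * Complex.I / N)
  have hroot : (cyclotomic N ℂ).IsRoot ω := hω.isRoot_cyclotomic hN
  obtain ⟨g, hg⟩ := hdvd
  have : (X ^ s - 1 : Polynomial ℂ) = cyclotomic N ℂ * g.map (Int.castRingHom ℂ) := by
    have := congrArg (Polynomial.map (Int.castRingHom ℂ)) hg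
    simpa [Polynomial.map_mul, map_cyclotomic] using this
  have hω1 : ω ^ s = 1 := by
    have := congrArg (Polynomial.eval ω) this
    simp [Polynomial.IsRoot.def.mp hroot] at this
    exact sub_eq_zero.mp this
  have hdv := hω.pow_eq_one_iff_dvd s |>.mp hω1
  have := Nat.le_of_dvd hs hdv
  omega

lemma cyclotomic_dvd_qbinom_int {N j : ℕ} (h0 : 0 < j) (hj : j < N) :
    cyclotomic N ℤ ∣ qbinom ℤ N j := by
  have hN : 0 < N := by omega
  have hprime : Prime (cyclotomic N ℤ) := (cyclotomic.irreducible hN).prime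
  have hdvd : cyclotomic N ℤ ∣ qbinom ℤ N j * ∏ i ∈ range j, (X ^ (i+1) - 1) := by
    rw [qbinom_mul_prod N j (le_of_lt hj)]
    have h0mem : (0:ℕ) ∈ range j := by simp [h0]
    refine dvd_trans ?_ (Finset.dvd_prod_of_mem _ h0mem)
    simpa using cyclotomic.dvd_X_pow_sub_one N ℤ
  rcases hprime.dvd_mul.mp hdvd with h | h
  · exact h
  · exfalso
    rcases (hprime.dvd_finset_prod_iff _).mp h with ⟨i, hi, hdvd'⟩
    simp only [Finset.mem_range] at hi
    exact cyclotomic_not_dvd_X_pow_sub_one hN (by omega) (by omega) hdvd'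

lemma cyclotomic_dvd_qbinom {N j : ℕ} (h0 : 0 < j) (hj : j < N) :
    cyclotomic N R ∣ qbinom R N j := by
  obtain ⟨g, hg⟩ := cyclotomic_dvd_qbinom_int h0 hj
  refine ⟨g.map (Int.castRingHom R), ?_⟩
  have := congrArg (Polynomial.map (Int.castRingHom R)) hg
  rwa [Polynomial.map_mul, map_cyclotomic, qbinom_map] at this

/-- forward difference operator -/
def fdiff (f : ℕ → R) : ℕ → R := fun m => f (m+1) - f m

lemma fdiff_zero_fun : fdiff (0 : ℕ → R) = 0 := by funext m; simp [fdiff]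

lemma fdiff_iter_zero_fun (s : ℕ) : fdiff^[s] (0 : ℕ → R) = 0 :=
  Function.iterate_fixed fdiff_zero_fun s

lemma fdiff_add (f g : ℕ → R) :
    fdiff (fun m => f m + g m) = fun m => fdiff f m + fdiff g m := by
  funext m; simp [fdiff]; ring

lemma fdiff_iter_add (s : ℕ) (f g : ℕ → R) :
    fdiff^[s] (fun m => f m + g m) = fun m => fdiff^[s] f m + fdiff^[s] g m := by
  induction s generalizing f g with
  | zero => simp
  | succ s ih =>
    rw [Function.iterate_succ_apply, Function.iterate_succ_apply,
      Function.iterate_succ_apply, fdiff_add, ih]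

lemma fdiff_const_mul (c : R) (f : ℕ → R) :
    fdiff (fun m => c * f m) = fun m => c * fdiff f m := by
  funext m; simp [fdiff]; ring

lemma fdiff_iter_const_mul (s : ℕ) (c : R) (f : ℕ → R) :
    fdiff^[s] (fun m => c * f m) = fun m => c * fdiff^[s] f m := by
  induction s generalizing f with
  | zero => simp
  | succ s ih =>
    rw [Function.iterate_succ_apply, Function.iterate_succ_apply, fdiff_const_mul, ih]

lemma fdiff_shift (j : ℕ) (f : ℕ → R) :
    fdiff (fun m => f (m+j)) = fun m => fdiff f (m+j) := by
  funext m; simp only [fdiff]; congr 2; omega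

lemma fdiff_iter_shift (s j : ℕ) (f : ℕ → R) :
    fdiff^[s] (fun m => f (m+j)) = fun m => fdiff^[s] f (m+j) := by
  induction s generalizing f with
  | zero => simp
  | succ s ih =>
    rw [Function.iterate_succ_apply, Function.iterate_succ_apply, fdiff_shift, ih]

/-- `DD f D` : `f` is a "polynomial of degree at most `D`" in the finite-difference sense. -/
def DD (f : ℕ → R) (D : ℕ) : Prop := fdiff^[D+1] f = 0

lemma fdiff_iter_eq_zero {f : ℕ → R} {D : ℕ} (h : DD f D) {s : ℕ} (hs : D + 1 ≤ s) :
    fdiff^[s] f = 0 := by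
  obtain ⟨t, rfl⟩ := Nat.exists_eq_add_of_le hs
  rw [add_comm, Function.iterate_add_apply, h, fdiff_iter_zero_fun]

lemma DD.mono {f : ℕ → R} {D E : ℕ} (h : DD f D) (hDE : D ≤ E) : DD f E :=
  fdiff_iter_eq_zero h (by omega)

lemma DD.shift {f : ℕ → R} {D : ℕ} (h : DD f D) (j : ℕ) :
    DD (fun m => f (m + j)) D := by
  unfold DD
  rw [fdiff_iter_shift]
  funext m
  rw [h]
  rfl

lemma DD.add {f g : ℕ → R} {D : ℕ} (hf : DD f D) (hg : DD g D) :
    DD (fun m => f m + g m) D := by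
  unfold DD
  rw [fdiff_iter_add, hf, hg]
  funext m; simp

lemma DD.const_mul {f : ℕ → R} {D : ℕ} (hf : DD f D) (c : R) :
    DD (fun m => c * f m) D := by
  unfold DD
  rw [fdiff_iter_const_mul, hf]
  funext m; simp

lemma DD.const (c : R) : DD (fun _ => c) 0 := by
  unfold DD
  funext m
  simp [fdiff]

lemma eq_const_of_fdiff_eq_zero {f : ℕ → R} (h : fdiff f = 0) : ∀ m, f m = f 0 := by
  intro m
  induction m with
  | zero => rfl
  | succ m ih =>
    have := congrFun h m
    simp only [fdiff, Pi.zero_apply, sub_eq_zero] at this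
    rw [this, ih]

lemma DD.mul : ∀ (k : ℕ) {a b : ℕ} {f g : ℕ → R}, a + b ≤ k → DD f a → DD g b →
    DD (fun m => f m * g m) (a + b) := by
  intro k
  induction k with
  | zero =>
    intro a b f g hk hf hg
    have ha : a = 0 := by omega
    have hb : b = 0 := by omega
    subst ha; subst hb
    have hfc := eq_const_of_fdiff_eq_zero (f := f) hf
    have : (fun m => f m * g m) = fun m => f 0 * g m := by
      funext m; rw [hfc m]
    rw [this]
    exact hg.const_mul (f 0)
  | succ k ih =>
    intro a b f g hk hf hg
    cases a with
    | zero =>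
      have hfc := eq_const_of_fdiff_eq_zero (f := f) hf
      have : (fun m => f m * g m) = fun m => f 0 * g m := by
        funext m; rw [hfc m]
      rw [this]
      exact (hg.const_mul (f 0)).mono (by omega)
    | succ a =>
    cases b with
    | zero =>
      have hgc := eq_const_of_fdiff_eq_zero (f := g) hg
      have : (fun m => f m * g m) = fun m => g 0 * f m := by
        funext m; rw [hgc m]; ring
      rw [this]
      have := hf.const_mul (g 0)
      exact this.mono (by omega)
    | succ b =>
      have hstep : fdiff (fun m => f m * g m)
          = fun m => f (m+1) * fdiff g m + fdiff f m * g m := by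
        funext m; simp [fdiff]; ring
      have h1 : DD (fun m => f (m+1) * fdiff g m) (a + 1 + b) := by
        have hfs : DD (fun m => f (m+1)) (a+1) := hf.shift 1
        have hgd : DD (fdiff g) b := by
          unfold DD
          rw [← Function.iterate_succ_apply]
          exact hg
        exact ih (by omega) hfs hgd
      have h2 : DD (fun m => fdiff f m * g m) (a + (b + 1)) := by
        have hfd : DD (fdiff f) a := by
          unfold DD
          rw [← Function.iterate_succ_apply]
          exact hf
        exact ih (by omega) hfd hg
      have hsum : DD (fdiff (fun m => f m * g m)) (a + b + 1) := by
        rw [hstep]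
        exact (h1.mono (by omega)).add (h2.mono (by omega))
      unfold DD at hsum ⊢
      rw [Function.iterate_succ_apply]
      have : a + 1 + (b + 1) = (a + b + 1) + 1 := by omega
      rw [this]
      exact hsum

lemma DD.choose (t : ℕ) : DD (fun m => ((m.choose t : ℕ) : R)) t := by
  induction t with
  | zero => simpa using DD.const (1 : R)
  | succ t ih =>
    have hstep : fdiff (fun m => ((m.choose (t+1) : ℕ) : R))
        = fun m => ((m.choose t : ℕ) : R) := by
      funext m
      simp only [fdiff, Nat.choose_succ_succ m t]
      push_cast
      ring
    unfold DD
    rw [Function.iterate_succ_apply, hstep]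
    exact ih

lemma DD_eval : ∀ (D : ℕ) (P : Polynomial R), P.natDegree ≤ D →
    DD (fun m => P.eval ((m : ℕ) : R)) D := by
  intro D
  induction D with
  | zero =>
    intro P hP
    rw [Polynomial.eq_C_of_natDegree_le_zero hP]
    simpa using DD.const (P.coeff 0)
  | succ D ih =>
    intro P hP
    set Q : Polynomial R := taylor 1 P - P with hQ
    have hQdeg : Q.natDegree ≤ D := by
      rw [natDegree_le_iff_coeff_eq_zero]
      intro M hM
      rcases lt_or_ge P.natDegree M with hM2 | hM2
      · have h1 : (taylor (1:R) P).coeff M = 0 := by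
          apply coeff_eq_zero_of_natDegree_lt
          rwa [natDegree_taylor]
        have h2 : P.coeff M = 0 := coeff_eq_zero_of_natDegree_lt hM2
        simp [hQ, h1, h2]
      · -- D < M ≤ natDegree P ≤ D+1, so M = D+1 = natDegree P
        have hM3 : M = P.natDegree := by omega
        have h1 : (taylor (1:R) P).coeff M = P.coeff M := by
          rw [taylor_coeff]
          have : hasseDeriv M P = C (P.coeff M) := by
            ext j
            rw [hasseDeriv_coeff, coeff_C]
            cases j with
            | zero => simp
            | succ j =>
              have : P.coeff (j + 1 + M) = 0 := by
                apply coeff_eq_zero_of_natDegree_lt; omega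
              simp [this]
          rw [this, eval_C]
        simp [hQ, h1]
    have hstep : fdiff (fun m => P.eval ((m : ℕ) : R))
        = fun m => Q.eval ((m : ℕ) : R) := by
      funext m
      simp only [fdiff, hQ, eval_sub, taylor_apply, eval_comp, eval_add, eval_X, eval_C]
      push_cast
      ring
    unfold DD
    rw [Function.iterate_succ_apply, hstep]
    exact ih Q hQdeg

lemma shift_eq : ∀ (N : ℕ) (f : ℕ → R) (m : ℕ),
    f (m + N) = ∑ t ∈ range (N+1), ((N.choose t : ℕ) : R) * fdiff^[t] f m := by
  intro N
  induction N with
  | zero => intro f m; simp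
  | succ N ih =>
    intro f m
    have h1 : f (m + (N+1)) = f (m + N) + fdiff f (m + N) := by
      simp only [fdiff]
      have : m + (N + 1) = m + N + 1 := by omega
      rw [this]
      ring
    rw [h1, ih f m, ih (fdiff f) m]
    have h3 : ∑ t ∈ range (N+1), ((N.choose t : ℕ) : R) * fdiff^[t] (fdiff f) m
        = ∑ t ∈ range (N+1), ((N.choose t : ℕ) : R) * fdiff^[t+1] f m := by
      refine Finset.sum_congr rfl fun t _ => ?_
      rw [← Function.iterate_succ_apply]
    rw [h3]
    rw [Finset.sum_range_succ' (fun t => (((N+1).choose t : ℕ) : R) * fdiff^[t] f m) (N+1)]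
    rw [Finset.sum_range_succ' (fun t => ((N.choose t : ℕ) : R) * fdiff^[t] f m) N]
    have h4 : ∑ t ∈ range (N+1), (((N+1).choose (t+1) : ℕ) : R) * fdiff^[t+1] f m
        = ∑ t ∈ range (N+1), ((N.choose t : ℕ) : R) * fdiff^[t+1] f m
          + ∑ t ∈ range (N+1), ((N.choose (t+1) : ℕ) : R) * fdiff^[t+1] f m := by
      rw [← Finset.sum_add_distrib]
      refine Finset.sum_congr rfl fun t _ => ?_
      rw [Nat.choose_succ_succ]
      push_cast
      ring
    rw [h4]
    have h5 : ∑ t ∈ range (N+1), ((N.choose (t+1) : ℕ) : R) * fdiff^[t+1] f m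
        = ∑ t ∈ range N, ((N.choose (t+1) : ℕ) : R) * fdiff^[t+1] f m := by
      rw [Finset.sum_range_succ]
      simp
    rw [h5]
    simp only [Nat.choose_zero_right, Nat.cast_one, Function.iterate_zero]
    ring

noncomputable def Sq (ε : R) (n z : ℕ) (f : ℕ → R) : Polynomial R :=
  ∑ m ∈ range (n+1), C (ε ^ m * f m) * X ^ (z * m) * qbinom R n m

lemma Sq_zero_fun (ε : R) (n z : ℕ) : Sq ε n z 0 = 0 := by simp [Sq]

lemma Sq_step (ε : R) (n z : ℕ) (f : ℕ → R) :
    Sq ε (n+1) z f = Sq ε n (z+1) f + C ε * X ^ z * Sq ε n z (fun m => f (m+1)) := by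
  have hsplit : ∀ m : ℕ, C (ε ^ (m+1) * f (m+1)) * X ^ (z * (m+1)) * qbinom R (n+1) (m+1)
      = C (ε ^ (m+1) * f (m+1)) * X ^ ((z+1) * (m+1)) * qbinom R n (m+1)
        + C ε * X ^ z * (C (ε ^ m * f (m+1)) * X ^ (z * m) * qbinom R n m) := by
    intro m
    rw [qbinom_pascal']
    simp only [C_mul, C_pow]
    ring
  unfold Sq
  rw [Finset.sum_range_succ' (fun m => C (ε ^ m * f m) * X ^ (z * m) * qbinom R (n+1) m) (n+1)]
  rw [Finset.sum_congr rfl (fun m _ => hsplit m), Finset.sum_add_distrib]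
  have e2 : ∑ m ∈ range (n+1), C (ε ^ m * f m) * X ^ ((z+1) * m) * qbinom R n m
      = ∑ m ∈ range (n+1), C (ε ^ (m+1) * f (m+1)) * X ^ ((z+1) * (m+1)) * qbinom R n (m+1)
        + C (ε ^ 0 * f 0) * X ^ ((z+1) * 0) * qbinom R n 0 := by
    rw [Finset.sum_range_succ' (fun m => C (ε ^ m * f m) * X ^ ((z+1) * m) * qbinom R n m) n,
      Finset.sum_range_succ (fun m => C (ε ^ (m+1) * f (m+1)) * X ^ ((z+1)*(m+1)) * qbinom R n (m+1)) n,
      qbinom_eq_zero (show n < n+1 by omega)]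
    ring
  rw [e2]
  have e3 : ∑ m ∈ range (n+1), C ε * X ^ z * (C (ε ^ m * f (m+1)) * X ^ (z * m) * qbinom R n m)
      = C ε * X ^ z * ∑ m ∈ range (n+1), C (ε ^ m * f (m+1)) * X ^ (z * m) * qbinom R n m :=
    (Finset.mul_sum _ _ _).symm
  rw [e3]
  simp only [qbinom_zero_right, pow_zero, mul_zero, one_mul, mul_one]
  ring

lemma Sq_steps (ε : R) : ∀ (r n z : ℕ) (f : ℕ → R), r ≤ n →
    Sq ε n z f = ∑ j ∈ range (r+1), C (ε ^ j) * X ^ (j * z) * qbinom R r j *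
      Sq ε (n - r) (z + (r - j)) (fun m => f (m + j)) := by
  intro r
  induction r with
  | zero =>
    intro n z f _
    simp [qbinom_zero_right, Sq]
  | succ r ih =>
    intro n z f hr
    have hr' : r ≤ n := by omega
    have hnr : n - r = (n - (r+1)) + 1 := by omega
    rw [ih n z f hr']
    have hterm : ∀ j ∈ range (r+1),
        C (ε ^ j) * X ^ (j * z) * qbinom R r j * Sq ε (n - r) (z + (r - j)) (fun m => f (m + j))
        = C (ε ^ j) * X ^ (j * z) * qbinom R r j *
            Sq ε (n - (r+1)) (z + (r - j) + 1) (fun m => f (m + j))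
          + C (ε ^ (j+1)) * X ^ ((j+1) * z) * (X ^ (r - j) * qbinom R r j) *
            Sq ε (n - (r+1)) (z + (r - j)) (fun m => f (m + (j+1))) := by
      intro j hj
      rw [hnr, Sq_step]
      have hshift : (fun m => f (m + 1 + j)) = fun m => f (m + (j+1)) := by
        funext m; congr 1; omega
      simp only [hshift, C_mul, C_pow]
      ring
    rw [Finset.sum_congr rfl hterm, Finset.sum_add_distrib]
    -- Right-hand side
    rw [Finset.sum_range_succ' (fun j => C (ε ^ j) * X ^ (j * z) * qbinom R (r+1) j *
      Sq ε (n - (r+1)) (z + (r+1 - j)) (fun m => f (m + j))) (r+1)]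
    have hsplitR : ∀ j ∈ range (r+1),
        C (ε ^ (j+1)) * X ^ ((j+1) * z) * qbinom R (r+1) (j+1) *
          Sq ε (n - (r+1)) (z + (r+1 - (j+1))) (fun m => f (m + (j+1)))
        = C (ε ^ (j+1)) * X ^ ((j+1) * z) * qbinom R r (j+1) *
            Sq ε (n - (r+1)) (z + (r - j)) (fun m => f (m + (j+1)))
          + C (ε ^ (j+1)) * X ^ ((j+1) * z) * (X ^ (r - j) * qbinom R r j) *
            Sq ε (n - (r+1)) (z + (r - j)) (fun m => f (m + (j+1))) := by
      intro j hj
      have e : r + 1 - (j + 1) = r - j := by omega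
      rw [e, qbinom_succ_succ]
      ring
    rw [Finset.sum_congr rfl hsplitR, Finset.sum_add_distrib]
    -- match the two pairs of sums
    have hA : ∑ j ∈ range (r+1), C (ε ^ j) * X ^ (j * z) * qbinom R r j *
          Sq ε (n - (r+1)) (z + (r - j) + 1) (fun m => f (m + j))
        = (∑ j ∈ range (r+1), C (ε ^ (j+1)) * X ^ ((j+1) * z) * qbinom R r (j+1) *
            Sq ε (n - (r+1)) (z + (r - j)) (fun m => f (m + (j+1))))
          + C (ε ^ 0) * X ^ (0 * z) * qbinom R (r+1) 0 *
            Sq ε (n - (r+1)) (z + (r+1 - 0)) (fun m => f (m + 0)) := by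
      rw [Finset.sum_range_succ' (fun j => C (ε ^ j) * X ^ (j * z) * qbinom R r j *
        Sq ε (n - (r+1)) (z + (r - j) + 1) (fun m => f (m + j))) r]
      rw [Finset.sum_range_succ (fun j => C (ε ^ (j+1)) * X ^ ((j+1) * z) * qbinom R r (j+1) *
        Sq ε (n - (r+1)) (z + (r - j)) (fun m => f (m + (j+1)))) r]
      rw [qbinom_eq_zero (show r < r+1 by omega)]
      have hcongr : ∀ j ∈ range r,
          C (ε ^ (j+1)) * X ^ ((j+1) * z) * qbinom R r (j+1) *
            Sq ε (n - (r+1)) (z + (r - (j+1)) + 1) (fun m => f (m + (j+1)))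
          = C (ε ^ (j+1)) * X ^ ((j+1) * z) * qbinom R r (j+1) *
            Sq ε (n - (r+1)) (z + (r - j)) (fun m => f (m + (j+1))) := by
        intro j hj
        simp only [Finset.mem_range] at hj
        have : z + (r - (j+1)) + 1 = z + (r - j) := by omega
        rw [this]
      rw [Finset.sum_congr rfl hcongr]
      have h0 : C (ε ^ 0) * X ^ (0 * z) * qbinom R r 0 *
            Sq ε (n - (r+1)) (z + (r - 0) + 1) (fun m => f (m + 0))
          = C (ε ^ 0) * X ^ (0 * z) * qbinom R (r+1) 0 *
            Sq ε (n - (r+1)) (z + (r+1 - 0)) (fun m => f (m + 0)) := by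
        rw [qbinom_zero_right, qbinom_zero_right]
        have : z + (r - 0) + 1 = z + (r + 1 - 0) := by omega
        rw [this]
      rw [h0]
      ring
    rw [hA]
    ring

lemma SqA (ε : R) (N n z : ℕ) (f : ℕ → R) :
    Sq ε n (z + N) f = ∑ t ∈ range (n+1),
      (X^N - 1)^t * Sq ε n z (fun m => ((m.choose t : ℕ) : R) * f m) := by
  have hswap : ∑ t ∈ range (n+1), (X^N - 1)^t * Sq ε n z (fun m => ((m.choose t : ℕ) : R) * f m)
      = ∑ m ∈ range (n+1), ∑ t ∈ range (n+1),
          (X^N - 1)^t * (C (ε ^ m * (((m.choose t : ℕ) : R) * f m)) * X ^ (z * m) * qbinom R n m) := by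
    rw [Finset.sum_comm]
    refine Finset.sum_congr rfl fun t _ => ?_
    rw [Sq, Finset.mul_sum]
  rw [hswap, Sq]
  refine Finset.sum_congr rfl fun m hm => ?_
  simp only [Finset.mem_range] at hm
  have hbin : ∑ t ∈ range (n+1), (X^N - 1)^t * (((m.choose t : ℕ) : Polynomial R))
      = X ^ (N * m) := by
    have hext : ∑ t ∈ range (n+1), (X^N - 1)^t * (((m.choose t : ℕ) : Polynomial R))
        = ∑ t ∈ range (m+1), (X^N - 1)^t * (((m.choose t : ℕ) : Polynomial R)) := by
      symm
      apply Finset.sum_subset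
      · intro t ht
        simp only [Finset.mem_range] at *
        omega
      · intro t _ ht
        simp only [Finset.mem_range] at ht
        rw [Nat.choose_eq_zero_of_lt (by omega)]
        simp
    rw [hext]
    have := add_pow ((X:Polynomial R)^N - 1) 1 m
    simp only [one_pow, mul_one] at this
    rw [sub_add_cancel] at this
    rw [pow_mul, this]
  calc C (ε ^ m * f m) * X ^ ((z + N) * m) * qbinom R n m
      = (X ^ (N * m)) * (C (ε ^ m * f m) * X ^ (z * m) * qbinom R n m) := by
        rw [show (z + N) * m = N * m + z * m by ring, pow_add]
        ring
    _ = (∑ t ∈ range (n+1), (X^N - 1)^t * (((m.choose t : ℕ) : Polynomial R)))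
          * (C (ε ^ m * f m) * X ^ (z * m) * qbinom R n m) := by rw [hbin]
    _ = _ := by
        rw [Finset.sum_mul]
        refine Finset.sum_congr rfl fun t _ => ?_
        have : C (ε ^ m * (((m.choose t : ℕ) : R) * f m))
            = (((m.choose t : ℕ) : Polynomial R)) * C (ε ^ m * f m) := by
          rw [show ε ^ m * (((m.choose t : ℕ) : R) * f m)
            = ((m.choose t : ℕ) : R) * (ε ^ m * f m) by ring, C_mul, map_natCast]
        rw [this]
        ring

lemma SqB (ε : R) (N n z : ℕ) (f : ℕ → R) :
    Sq ε n z (fun m => f (m + N)) = ∑ t ∈ range (N+1),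
      C ((N.choose t : ℕ) : R) * Sq ε n z (fdiff^[t] f) := by
  have hswap : ∑ t ∈ range (N+1), C ((N.choose t : ℕ) : R) * Sq ε n z (fdiff^[t] f)
      = ∑ m ∈ range (n+1), ∑ t ∈ range (N+1),
          C ((N.choose t : ℕ) : R) * (C (ε ^ m * fdiff^[t] f m) * X ^ (z * m) * qbinom R n m) := by
    rw [Finset.sum_comm]
    refine Finset.sum_congr rfl fun t _ => ?_
    rw [Sq, Finset.mul_sum]
  rw [hswap, Sq]
  refine Finset.sum_congr rfl fun m _ => ?_
  rw [shift_eq N f m]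
  rw [Finset.mul_sum, map_sum, Finset.sum_mul, Finset.sum_mul]
  refine Finset.sum_congr rfl fun t _ => ?_
  rw [show ε ^ m * (((N.choose t : ℕ):R) * fdiff^[t] f m)
    = ((N.choose t : ℕ):R) * (ε ^ m * fdiff^[t] f m) by ring, C_mul]
  ring

theorem key {ε : R} {N : ℕ} (hN : 0 < N) (hε : ε ^ N = -1) :
    ∀ (d n D z : ℕ) (f : ℕ → R), DD f D → (D + 2*d + 1) * N ≤ n →
      cyclotomic N R ^ (d+1) ∣ Sq ε n z f := by
  intro d
  induction d using Nat.strong_induction_on with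
  | _ d ihd =>
  intro n
  induction n using Nat.strong_induction_on with
  | _ n ihn =>
  intro D z f hf hn
  have hΦdvd : cyclotomic N R ∣ X ^ N - 1 := cyclotomic.dvd_X_pow_sub_one N R
  have hNn : N ≤ n := le_trans (by nlinarith) hn
  have hn'lt : n - N < n := by omega
  have hexp : (D + 2*d + 1) * N = (D + 2*d) * N + N := by ring
  have hthr : (D + 2*d) * N ≤ n - N := by omega
  have hIH : ∀ (e D' z' : ℕ) (f' : ℕ → R), e ≤ d → DD f' D' → (D' + 2*e + 1) * N ≤ n - N →
      cyclotomic N R ^ (e+1) ∣ Sq ε (n - N) z' f' := by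
    intro e D' z' f' he hf' hth
    rcases eq_or_lt_of_le he with rfl | hlt
    · exact ihn (n - N) hn'lt D' z' f' hf' hth
    · exact ihd e hlt (n - N) D' z' f' hf' hth
  have hIH0 : ∀ (D' z' : ℕ) (f' : ℕ → R), DD f' D' → (D' + 2*d) * N ≤ n - N →
      cyclotomic N R ^ d ∣ Sq ε (n - N) z' f' := by
    intro D' z' f' hf' hth
    cases d with
    | zero => simpa using one_dvd _
    | succ d'' =>
      refine hIH d'' D' z' f' (by omega) hf' ?_
      have h1 : (D' + 2*d''+1) * N ≤ (D' + 2*(d''+1)) * N := Nat.mul_le_mul_right _ (by omega)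
      omega
  obtain ⟨K, hK⟩ : ∃ K, N = K + 1 := ⟨N - 1, by omega⟩
  have hsplit3 : ∀ (g : ℕ → Polynomial R), ∑ j ∈ range (N+1), g j
      = (g 0 + g N) + ∑ j ∈ range K, g (j+1) := by
    intro g
    rw [hK, Finset.sum_range_succ, Finset.sum_range_succ']
    ring
  rw [Sq_steps ε N n z f hNn, hsplit3]
  refine dvd_add ?h0N ?hmid
  case hmid =>
    refine Finset.dvd_sum fun j hj => ?_
    simp only [Finset.mem_range] at hj
    have hqb : cyclotomic N R ∣ qbinom R N (j+1) :=
      cyclotomic_dvd_qbinom (by omega) (by omega)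
    have hS : cyclotomic N R ^ d ∣ Sq ε (n - N) (z + (N - (j+1))) (fun m => f (m + (j+1))) :=
      hIH0 D _ _ (hf.shift (j+1)) hthr
    rw [pow_succ']
    exact mul_dvd_mul (hqb.mul_left _) hS
  case h0N =>
    have hconv : C (ε ^ 0) * X ^ (0 * z) * qbinom R N 0 *
          Sq ε (n - N) (z + (N - 0)) (fun m => f (m + 0))
        + C (ε ^ N) * X ^ (N * z) * qbinom R N N *
          Sq ε (n - N) (z + (N - N)) (fun m => f (m + N))
        = Sq ε (n - N) (z + N) f
          - X ^ (N * z) * Sq ε (n - N) z (fun m => f (m + N)) := by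
      rw [hε, qbinom_diag, qbinom_zero_right]
      have h1 : (fun m => f (m + 0)) = f := rfl
      simp only [h1, pow_zero, map_one, one_mul, Nat.zero_mul, Nat.sub_zero, Nat.sub_self,
        add_zero, mul_one, map_neg]
      ring
    rw [hconv, SqA ε N (n - N) z f, SqB ε N (n - N) z f]
    rw [Finset.sum_range_succ' (fun t => (X^N - 1)^t *
      Sq ε (n - N) z (fun m => ((m.choose t : ℕ) : R) * f m)) (n - N)]
    rw [Finset.sum_range_succ' (fun t => C ((N.choose t : ℕ) : R) *
      Sq ε (n - N) z (fdiff^[t] f)) N]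
    have hc0 : (fun m => ((m.choose 0 : ℕ) : R) * f m) = f := by
      funext m; simp
    simp only [hc0, pow_zero, one_mul, Function.iterate_zero, id_eq,
      Nat.choose_zero_right, Nat.cast_one, map_one]
    have hre : ∀ (a b c : Polynomial R),
        (a + c) - X ^ (N * z) * (b + c) = ((1 - X ^ (N * z)) * c + a) - X ^ (N * z) * b :=
      fun a b c => by ring
    rw [hre]
    refine dvd_sub (dvd_add ?hA ?hB) ?hC
    case hA =>
      have h1 : cyclotomic N R ∣ 1 - X ^ (N * z) := by
        have h2 : cyclotomic N R ∣ X ^ (N * z) - 1 := by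
          have h3 : (X : Polynomial R) ^ (N * z) - 1 = (X ^ N) ^ z - 1 ^ z := by
            rw [pow_mul, one_pow]
          rw [h3]
          exact dvd_trans hΦdvd (sub_dvd_pow_sub_pow _ _ _)
        have := h2.neg_right
        rwa [neg_sub] at this
      have h2 : cyclotomic N R ^ d ∣ Sq ε (n - N) z f := hIH0 D z f hf hthr
      rw [pow_succ']
      exact mul_dvd_mul h1 h2
    case hB =>
      refine Finset.dvd_sum fun t _ => ?_
      rcases le_or_gt (d+1) (t+1) with hle | hlt
      · refine dvd_mul_of_dvd_left ?_ _
        exact dvd_trans (pow_dvd_pow_of_dvd hΦdvd (d+1)) (pow_dvd_pow _ hle)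
      · have ht : t + 1 ≤ d := by omega
        have hpow : cyclotomic N R ^ (d+1)
            = cyclotomic N R ^ (t+1) * cyclotomic N R ^ ((d - (t+1)) + 1) := by
          rw [← pow_add]; congr 1; omega
        rw [hpow]
        have hDD : DD (fun m => ((m.choose (t+1) : ℕ) : R) * f m) (D + (t+1)) := by
          have := DD.mul ((t+1) + D) le_rfl (DD.choose (t+1)) hf
          exact this.mono (by omega)
        have hth : ((D + (t+1)) + 2*(d - (t+1)) + 1) * N ≤ n - N := by
          refine le_trans (Nat.mul_le_mul_right _ (by omega)) hthr
        exact mul_dvd_mul (pow_dvd_pow_of_dvd hΦdvd _)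
          (hIH (d - (t+1)) (D + (t+1)) z _ (by omega) hDD hth)
    case hC =>
      refine dvd_mul_of_dvd_right (Finset.dvd_sum fun t _ => ?_) _
      rcases le_or_gt (D+1) (t+1) with hle | hlt
      · have hz : fdiff^[t+1] f = 0 := fdiff_iter_eq_zero hf hle
        rw [hz, Sq_zero_fun, mul_zero]
        exact dvd_zero _
      · have ht : t + 1 ≤ D := by omega
        refine dvd_mul_of_dvd_right ?_ _
        have hDD : DD (fdiff^[t+1] f) (D - (t+1)) := by
          unfold DD
          rw [← Function.iterate_add_apply]
          have he : (D - (t+1)) + 1 + (t+1) = D + 1 := by omega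
          rw [he]
          exact hf
        have hth : ((D - (t+1)) + 2*d + 1) * N ≤ n - N := by
          refine le_trans (Nat.mul_le_mul_right _ (by omega)) hthr
        exact hIH d (D - (t+1)) z _ le_rfl hDD hth

/-- The subring ℤ[ζ] of ℂ. -/
noncomputable abbrev Zadj (ζ : ℂ) : Type := Algebra.adjoin ℤ ({ζ} : Set ℂ)

/-- ζ as an element of ℤ[ζ]. -/
noncomputable def zeta (ζ : ℂ) : Zadj ζ := ⟨ζ, Algebra.self_mem_adjoin_singleton ℤ ζ⟩

theorem higher_order_vanishing_poly (c k : ℕ) (hc : 1 ≤ c) (hk : Odd k) (hk0 : 0 < k)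
    (ζ : ℂ) (hζ : IsPrimitiveRoot ζ (2 * c)) (d z : ℕ) (P : Polynomial (Zadj ζ)) (n : ℕ)
    (hn : (P.natDegree + 2 * d + 1) * (k * c) ≤ n) :
    Polynomial.cyclotomic (k * c) (Zadj ζ) ^ (d + 1) ∣
      ∑ m ∈ Finset.range (n + 1), C (zeta ζ ^ m * P.eval (m : Zadj ζ)) * X ^ (z * m) *
        qbinom (Zadj ζ) n m := by
  have hN : 0 < k * c := by positivity
  have hζc : ζ ^ c = -1 := by
    have h1 : (ζ ^ c) ^ 2 = 1 := by
      rw [← pow_mul]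
      have : c * 2 = 2 * c := by ring
      rw [this]
      exact hζ.pow_eq_one
    have h2 : ζ ^ c ≠ 1 := hζ.pow_ne_one_of_pos_of_lt (by omega) (by omega)
    have h3 : (ζ ^ c - 1) * (ζ ^ c + 1) = 0 := by
      have := h1
      ring_nf
      ring_nf at this
      linear_combination this
    rcases mul_eq_zero.mp h3 with h | h
    · exact absurd (by linear_combination h) h2
    · linear_combination h
  have hε : zeta ζ ^ (k * c) = -1 := by
    apply Subtype.ext
    push_cast
    show ζ ^ (k * c) = -1
    rw [mul_comm, pow_mul, hζc]
    exact hk.neg_one_pow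
  have hDD : DD (fun m => P.eval ((m : ℕ) : Zadj ζ)) P.natDegree :=
    DD_eval P.natDegree P le_rfl
  have := key (R := Zadj ζ) hN hε d n P.natDegree z (fun m => P.eval ((m : ℕ) : Zadj ζ)) hDD hn
  simpa [Sq] using this
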